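/- Let K be a number field, m ≥ 2, c ∈ K with c ≠ 0, j a natural number with j ≤ m − 1, and ψ ∈ RatFunc K, and set φ := RatFunc.C c * RatFunc.X^j * ψ^m; assume deg φ := max(φ.num.natDegree, φ.denom.natDegree) ≥ 2. Let Φ : ℕ → RatFunc K be the iterate sequence of φ, let t be the least positive integer such that ∃ b : K, c^t = b^m, and let a ∈ K. Suppose the set V(a) := {x : K | (∃ b : K, x = b^m) ∧ ∃ n : ℕ, (Φ n).denom.eval a ≠ 0 ∧ (Φ n).num.eval a = x * (Φ n).denom.eval a} is infinite. Then Nat.gcd t j = 1, and there exist ℓ : ℕ and M ≥ 1 with M ≤ m such that N(a) := {n : ℕ | (Φ n).denom.eval a = 0 ∨ ∃ b : K, (Φ n).num.eval a = b^m * (Φ n).denom.eval a} = {ℓ + k*M | k : ℕ}; moreover M = t if j = 1, and M = orderOf ((j : ZMod (t*(j−1)))) if j ≥ 2. -/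

import Mathlib

open Polynomial IsDedekindDomain IsDedekindDomain.HeightOneSpectrum
open scoped Multiplicative

local notation "ℤₘ₀" => WithZero (Multiplicative ℤ)

section Helpers

variable {F : Type*} [Field F]

/-- The height-one prime of `F[X]` at the point `b`. -/
noncomputable def ptId (b : F) : IsDedekindDomain.HeightOneSpectrum (Polynomial F) where
  asIdeal := Ideal.span {X - C b}
  isPrime := (Ideal.span_singleton_prime (Polynomial.X_sub_C_ne_zero b)).mpr
    (Polynomial.prime_X_sub_C b)
  ne_bot := by
    rw [ne_eq, Ideal.span_singleton_eq_bot]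
    exact Polynomial.X_sub_C_ne_zero b

/-- The valuation on `RatFunc F` measuring order of vanishing at the point `b`. -/
noncomputable def ptVal (b : F) : Valuation (RatFunc F) ℤₘ₀ := (ptId b).valuation (RatFunc F)

theorem ptVal_poly_le_one (b : F) (p : Polynomial F) :
    ptVal b (algebraMap (Polynomial F) (RatFunc F) p) ≤ 1 :=
  valuation_le_one _ p

theorem ptVal_poly_lt_one_iff (b : F) (p : Polynomial F) :
    ptVal b (algebraMap (Polynomial F) (RatFunc F) p) < 1 ↔ p.eval b = 0 := by
  rw [ptVal, valuation_lt_one_iff_dvd]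
  show Ideal.span {X - C b} ∣ _ ↔ _
  rw [span_singleton_dvd_span_singleton_iff_dvd, Polynomial.dvd_iff_isRoot]
  rfl

theorem ptVal_poly_eq_one_iff (b : F) (p : Polynomial F) :
    ptVal b (algebraMap (Polynomial F) (RatFunc F) p) = 1 ↔ p.eval b ≠ 0 := by
  constructor
  · intro h hev
    have := (ptVal_poly_lt_one_iff b p).mpr hev
    rw [h] at this; exact lt_irrefl _ this
  · intro h
    refine le_antisymm (ptVal_poly_le_one b p) ?_
    by_contra hlt
    push_neg at hlt
    exact h ((ptVal_poly_lt_one_iff b p).mp hlt)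

theorem ptVal_C_eq_one (b : F) {k : F} (hk : k ≠ 0) : ptVal b (RatFunc.C k) = 1 := by
  rw [← RatFunc.algebraMap_C, ptVal_poly_eq_one_iff]
  simpa using hk

theorem ptVal_poly_ne_zero (b : F) {p : Polynomial F} (hp : p ≠ 0) :
    ptVal b (algebraMap (Polynomial F) (RatFunc F) p) ≠ 0 := by
  rw [ptVal, valuation_of_algebraMap]
  exact intValuation_ne_zero _ _ hp

theorem not_both_eval_zero (b : F) (f : RatFunc F) :
    ¬ (f.num.eval b = 0 ∧ f.denom.eval b = 0) := by
  rintro ⟨h1, h2⟩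
  obtain ⟨u, v, huv⟩ := f.isCoprime_num_denom
  have := congrArg (Polynomial.eval b) huv
  simp [h1, h2] at this

theorem ptVal_eq_div (b : F) (f : RatFunc F) :
    ptVal b f = ptVal b (algebraMap (Polynomial F) (RatFunc F) f.num) /
      ptVal b (algebraMap (Polynomial F) (RatFunc F) f.denom) := by
  conv_lhs => rw [← f.num_div_denom]
  exact map_div₀ (ptVal b) _ _

theorem ptVal_ne_zero (b : F) {f : RatFunc F} (hf : f ≠ 0) : ptVal b f ≠ 0 :=
  (Valuation.ne_zero_iff _).mpr hf

theorem ptVal_gt_one_iff (b : F) {f : RatFunc F} (hf : f ≠ 0) :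
    1 < ptVal b f ↔ f.denom.eval b = 0 := by
  have hnum := ptVal_poly_le_one b f.num
  rw [ptVal_eq_div b f]
  constructor
  · intro h
    by_contra hd
    have h1 : ptVal b (algebraMap (Polynomial F) (RatFunc F) f.denom) = 1 :=
      (ptVal_poly_eq_one_iff b f.denom).mpr hd
    rw [h1, div_one] at h
    exact absurd hnum (not_le.mpr h)
  · intro hd
    have h1 : ptVal b (algebraMap (Polynomial F) (RatFunc F) f.num) = 1 := by
      rw [ptVal_poly_eq_one_iff]
      exact fun hn => not_both_eval_zero b f ⟨hn, hd⟩
    rw [h1]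
    have hdlt : ptVal b (algebraMap (Polynomial F) (RatFunc F) f.denom) < 1 :=
      (ptVal_poly_lt_one_iff b f.denom).mpr hd
    have hdne : ptVal b (algebraMap (Polynomial F) (RatFunc F) f.denom) ≠ 0 :=
      ptVal_poly_ne_zero b f.denom_ne_zero
    rw [one_div]
    exact (one_lt_inv₀ (lt_of_le_of_ne (zero_le') (Ne.symm hdne))).mpr hdlt

theorem ptVal_lt_one_iff (b : F) {f : RatFunc F} (hf : f ≠ 0) :
    ptVal b f < 1 ↔ f.num.eval b = 0 := by
  have hnum := ptVal_poly_le_one b f.num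
  rw [ptVal_eq_div b f]
  constructor
  · intro h
    by_contra hn
    have h1 : ptVal b (algebraMap (Polynomial F) (RatFunc F) f.num) = 1 :=
      (ptVal_poly_eq_one_iff b f.num).mpr hn
    rw [h1] at h
    have hd : f.denom.eval b = 0 := by
      by_contra hd
      rw [(ptVal_poly_eq_one_iff b f.denom).mpr hd, div_one] at h
      exact lt_irrefl _ h
    have h2 : ptVal b (algebraMap (Polynomial F) (RatFunc F) f.denom) < 1 :=
      (ptVal_poly_lt_one_iff b f.denom).mpr hd
    have hdne : ptVal b (algebraMap (Polynomial F) (RatFunc F) f.denom) ≠ 0 :=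
      ptVal_poly_ne_zero b f.denom_ne_zero
    rw [one_div] at h
    have := (one_lt_inv₀ (lt_of_le_of_ne (zero_le') (Ne.symm hdne))).mpr h2
    exact absurd h (not_lt.mpr this.le)
  · intro hn
    have hd : f.denom.eval b ≠ 0 := fun hd => not_both_eval_zero b f ⟨hn, hd⟩
    rw [(ptVal_poly_eq_one_iff b f.denom).mpr hd, div_one]
    exact (ptVal_poly_lt_one_iff b f.num).mpr hn

theorem ptVal_eq_one_iff (b : F) {f : RatFunc F} (hf : f ≠ 0) :
    ptVal b f = 1 ↔ f.num.eval b ≠ 0 ∧ f.denom.eval b ≠ 0 := by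
  constructor
  · intro h
    constructor
    · intro hn
      have := (ptVal_lt_one_iff b hf).mpr hn; rw [h] at this; exact lt_irrefl _ this
    · intro hd
      have := (ptVal_gt_one_iff b hf).mpr hd; rw [h] at this; exact lt_irrefl _ this
  · rintro ⟨hn, hd⟩
    rcases lt_trichotomy (ptVal b f) 1 with h | h | h
    · exact absurd ((ptVal_lt_one_iff b hf).mp h) hn
    · exact h
    · exact absurd ((ptVal_gt_one_iff b hf).mp h) hd

theorem mult_int_pow_eq_one {y : Multiplicative ℤ} {k : ℕ} (hk : k ≠ 0) (h : y ^ k = 1) :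
    y = 1 := by
  have h2 : (k : ℤ) • Multiplicative.toAdd y = 0 := by
    rw [← toAdd_one, ← h, toAdd_pow, natCast_zsmul]
  rcases smul_eq_zero.mp h2 with h3 | h3
  · exact absurd (by exact_mod_cast h3) hk
  · rw [← ofAdd_toAdd y, h3, ofAdd_zero]

theorem zm0_pow_eq_one {x : ℤₘ₀} (hx : x ≠ 0) {k : ℕ} (hk : k ≠ 0) (h : x ^ k = 1) :
    x = 1 := by
  obtain ⟨y, rfl⟩ := WithZero.ne_zero_iff_exists.mp hx
  rw [← WithZero.coe_pow, ← WithZero.coe_one, WithZero.coe_inj] at h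
  rw [mult_int_pow_eq_one hk h]
  rfl

theorem zm0_zpow_ne_one {x : ℤₘ₀} (hx : x ≠ 0) (hx1 : x ≠ 1) {e : ℤ} (he : e ≠ 0) :
    x ^ e ≠ 1 := by
  obtain ⟨y, rfl⟩ := WithZero.ne_zero_iff_exists.mp hx
  intro h
  rw [← WithZero.coe_zpow, ← WithZero.coe_one, WithZero.coe_inj] at h
  have h2 : e • Multiplicative.toAdd y = 0 := by
    rw [← toAdd_one, ← h, toAdd_zpow]
  rcases smul_eq_zero.mp h2 with h3 | h3
  · exact he h3
  · apply hx1
    rw [← ofAdd_toAdd y, h3, ofAdd_zero, WithZero.coe_one]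

section Comp
variable (v : Valuation (RatFunc F) ℤₘ₀) (hC : ∀ k : F, k ≠ 0 → v (RatFunc.C k) = 1)

include hC

theorem vC_le_one (k : F) : v (RatFunc.C k) ≤ 1 := by
  rcases eq_or_ne k 0 with rfl | hk
  · simp
  · exact le_of_eq (hC k hk)

theorem aeval_le_one {g : RatFunc F} (hg : v g ≤ 1) (P : Polynomial F) :
    v (Polynomial.aeval g P) ≤ 1 := by
  induction P using Polynomial.induction_on' with
  | add p q hp hq => rw [map_add]; exact le_trans (v.map_add _ _) (max_le hp hq)
  | monomial n k =>
    rw [Polynomial.aeval_monomial, map_mul, map_pow]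
    calc v (algebraMap F (RatFunc F) k) * v g ^ n ≤ 1 * 1 := by
          apply mul_le_mul' ?_ (pow_le_one' hg n)
          rw [← RatFunc.algebraMap_eq_C] at *
          exact vC_le_one v hC k
      _ = 1 := mul_one 1

theorem aeval_pole {g : RatFunc F} (hg : 1 < v g) :
    ∀ n : ℕ, ∀ P : Polynomial F, P ≠ 0 → P.natDegree = n →
      v (Polynomial.aeval g P) = v g ^ n := by
  intro n
  induction n with
  | zero =>
    intro P hP h0
    obtain ⟨k, rfl⟩ := Polynomial.natDegree_eq_zero.mp h0
    have hk : k ≠ 0 := by rintro rfl; simp at hP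
    rw [Polynomial.aeval_C, RatFunc.algebraMap_eq_C, hC k hk, pow_zero]
  | succ d ih =>
    intro P hP hd
    have hdiv : P.divX ≠ 0 := by
      rw [ne_eq, Polynomial.divX_eq_zero_iff]
      intro h
      rw [h, Polynomial.natDegree_C] at hd
      exact Nat.succ_ne_zero d hd.symm
    have hdd : P.divX.natDegree = d := by
      rw [Polynomial.natDegree_divX_eq_natDegree_tsub_one, hd]; rfl
    have key : Polynomial.aeval g P =
        g * Polynomial.aeval g P.divX + RatFunc.C (P.coeff 0) := by
      conv_lhs => rw [← P.X_mul_divX_add]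
      rw [map_add, map_mul, Polynomial.aeval_X, Polynomial.aeval_C, RatFunc.algebraMap_eq_C]
    have h1 : v (g * Polynomial.aeval g P.divX) = v g ^ (d + 1) := by
      rw [map_mul, ih P.divX hdiv hdd, pow_succ']
    rw [key, Valuation.map_add_eq_of_lt_left, h1]
    rw [h1]
    calc v (RatFunc.C (P.coeff 0)) ≤ 1 := vC_le_one v hC _
      _ < v g ^ (d + 1) := one_lt_pow₀ hg (Nat.succ_ne_zero d)

theorem aeval_zero_unit {g : RatFunc F} (hg : v g < 1) {Q : Polynomial F}
    (hQ : Q.coeff 0 ≠ 0) : v (Polynomial.aeval g Q) = 1 := by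
  have key : Polynomial.aeval g Q =
      g * Polynomial.aeval g Q.divX + RatFunc.C (Q.coeff 0) := by
    conv_lhs => rw [← Q.X_mul_divX_add]
    rw [map_add, map_mul, Polynomial.aeval_X, Polynomial.aeval_C, RatFunc.algebraMap_eq_C]
  rw [key, Valuation.map_add_eq_of_lt_right, hC _ hQ]
  rw [hC _ hQ, map_mul]
  calc v g * v (Polynomial.aeval g Q.divX) ≤ v g * 1 :=
        mul_le_mul_right (aeval_le_one v hC hg.le _) _
    _ < 1 := by rwa [mul_one]

theorem aeval_zero {g : RatFunc F} (hg : v g < 1) (P : Polynomial F) (hP : P ≠ 0) :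
    v (Polynomial.aeval g P) = v g ^ P.rootMultiplicity 0 := by
  have hfact := Polynomial.pow_mul_divByMonic_rootMultiplicity_eq P (0 : F)
  set k := P.rootMultiplicity 0 with hk
  set Q := P /ₘ (X - C (0:F)) ^ k with hQdef
  have hQ : Q.coeff 0 ≠ 0 := by
    rw [Polynomial.coeff_zero_eq_eval_zero]
    exact Polynomial.eval_divByMonic_pow_rootMultiplicity_ne_zero 0 hP
  calc v (Polynomial.aeval g P) = v (Polynomial.aeval g ((X - C (0:F)) ^ k * Q)) := by
        rw [hfact]
    _ = v g ^ k * v (Polynomial.aeval g Q) := by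
        rw [map_mul, map_mul (v), map_pow, map_pow, map_sub, Polynomial.aeval_X,
          Polynomial.aeval_C, map_zero, sub_zero]
    _ = v g ^ k := by rw [aeval_zero_unit v hC hg hQ, mul_one]

theorem aeval_ne_zero_of_val {g : RatFunc F}
    (h0 : v g ≠ 0) (h1 : v g ≠ 1) {P : Polynomial F} (hP : P ≠ 0) :
    Polynomial.aeval g P ≠ 0 := by
  rcases lt_trichotomy (v g) 1 with h | h | h
  · intro hz
    have := aeval_zero v hC h P hP
    rw [hz, map_zero] at this
    exact pow_ne_zero _ h0 this.symm
  · exact absurd h h1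
  · intro hz
    have := aeval_pole v hC h P.natDegree P hP rfl
    rw [hz, map_zero] at this
    exact pow_ne_zero _ h0 this.symm

end Comp

/-- "nonconstant" rational functions -/
def Nonconst (g : RatFunc F) : Prop := ∀ k : F, g ≠ RatFunc.C k

theorem nonconst_ne_zero {g : RatFunc F} (hg : Nonconst g) : g ≠ 0 := by
  intro h; exact hg 0 (by rw [h, map_zero])

theorem num_or_denom_nonconst {g : RatFunc F} (hg : Nonconst g) :
    1 ≤ g.num.natDegree ∨ 1 ≤ g.denom.natDegree := by
  by_contra h
  push_neg at h
  obtain ⟨h1, h2⟩ := h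
  have hd : g.denom = 1 := (Polynomial.Monic.natDegree_eq_zero g.monic_denom).mp (by omega)
  obtain ⟨k, hk⟩ := Polynomial.natDegree_eq_zero.mp (by omega : g.num.natDegree = 0)
  apply hg k
  rw [← g.num_div_denom, hd, ← hk, map_one, div_one, ← RatFunc.algebraMap_C, hk]

theorem aeval_injective_of_nonconst {g : RatFunc F} (hg : Nonconst g) :
    Function.Injective (Polynomial.aeval g : Polynomial F →ₐ[F] RatFunc F) := by
  have key : ∀ P : Polynomial F, P ≠ 0 → Polynomial.aeval g P ≠ 0 := by
    set L := AlgebraicClosure F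
    set ι₀ : Polynomial F →+* RatFunc L :=
      (algebraMap (Polynomial L) (RatFunc L)).comp (Polynomial.mapRingHom (algebraMap F L))
    have hι₀ : Function.Injective ι₀ :=
      (IsFractionRing.injective (Polynomial L) (RatFunc L)).comp
        (Polynomial.map_injective _ (algebraMap F L).injective)
    set ι : RatFunc F →+* RatFunc L := IsFractionRing.lift hι₀ with hιdef
    have hι : ∀ p : Polynomial F, ι (algebraMap (Polynomial F) (RatFunc F) p) =
        algebraMap (Polynomial L) (RatFunc L) (p.map (algebraMap F L)) := fun p =>
      IsFractionRing.lift_algebraMap hι₀ p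
    have hcomp : ∀ P : Polynomial F,
        ι (Polynomial.aeval g P) = Polynomial.aeval (ι g) (P.map (algebraMap F L)) := by
      intro P
      have : (ι.comp (Polynomial.aeval g : Polynomial F →ₐ[F] RatFunc F).toRingHom) =
          ((Polynomial.aeval (ι g) : Polynomial L →ₐ[L] RatFunc L).toRingHom).comp
            (Polynomial.mapRingHom (algebraMap F L)) := by
        apply Polynomial.ringHom_ext
        · intro k
          simp only [RingHom.comp_apply, AlgHom.toRingHom_eq_coe, RingHom.coe_coe,
            Polynomial.aeval_C, Polynomial.coe_mapRingHom, Polynomial.map_C]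
          rw [IsScalarTower.algebraMap_apply F (Polynomial F) (RatFunc F) k,
            Polynomial.algebraMap_eq, hι (Polynomial.C k),
            IsScalarTower.algebraMap_apply L (Polynomial L) (RatFunc L) ((algebraMap F L) k),
            Polynomial.map_C, Polynomial.algebraMap_eq]
        · simp only [RingHom.comp_apply, AlgHom.toRingHom_eq_coe, RingHom.coe_coe,
            Polynomial.aeval_X, Polynomial.coe_mapRingHom, Polynomial.map_X]
      exact congrFun (congrArg (fun h => h.toFun) this) P
    have hg0 : g ≠ 0 := nonconst_ne_zero hg
    have hιg0 : ι g ≠ 0 := by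
      intro h
      exact hg0 (ι.injective (by rw [h, map_zero]))
    have hiν : ι g = algebraMap (Polynomial L) (RatFunc L) (g.num.map (algebraMap F L)) /
        algebraMap (Polynomial L) (RatFunc L) (g.denom.map (algebraMap F L)) := by
      conv_lhs => rw [← g.num_div_denom]
      rw [map_div₀, hι, hι]
    obtain ⟨b, hb⟩ : ∃ b : L, ptVal b (ι g) ≠ 0 ∧ ptVal b (ι g) ≠ 1 := by
      have hnum0 : g.num.map (algebraMap F L) ≠ 0 :=
        Polynomial.map_ne_zero (RatFunc.num_ne_zero hg0)
      have hden0 : g.denom.map (algebraMap F L) ≠ 0 :=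
        Polynomial.map_ne_zero g.denom_ne_zero
      have hnotboth : ∀ b : L, ¬((g.num.map (algebraMap F L)).eval b = 0 ∧
          (g.denom.map (algebraMap F L)).eval b = 0) := by
        rintro b ⟨h1, h2⟩
        obtain ⟨u, w, huw⟩ := g.isCoprime_num_denom
        have := congrArg (fun p => Polynomial.eval b (Polynomial.map (algebraMap F L) p)) huw
        simp only [Polynomial.map_add, Polynomial.map_mul, Polynomial.eval_add,
          Polynomial.eval_mul, Polynomial.map_one, Polynomial.eval_one, h1, h2,
          mul_zero, add_zero] at this
        exact one_ne_zero this.symm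
      rcases num_or_denom_nonconst hg with hnc | hnc
      · obtain ⟨b, hb⟩ := IsAlgClosed.exists_root (g.num.map (algebraMap F L)) (by
          rw [Polynomial.degree_map]
          intro h
          have := Polynomial.natDegree_eq_zero_iff_degree_le_zero.mpr (le_of_eq h)
          omega)
        refine ⟨b, ?_, ?_⟩
        · rw [hiν, map_div₀]
          exact div_ne_zero (ptVal_poly_ne_zero b hnum0) (ptVal_poly_ne_zero b hden0)
        · rw [hiν, map_div₀]
          have h1 : ptVal b (algebraMap (Polynomial L) (RatFunc L)
              (g.num.map (algebraMap F L))) < 1 := (ptVal_poly_lt_one_iff _ _).mpr hb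
          have h2 : ptVal b (algebraMap (Polynomial L) (RatFunc L)
              (g.denom.map (algebraMap F L))) = 1 := (ptVal_poly_eq_one_iff _ _).mpr
            (fun hz => hnotboth b ⟨hb, hz⟩)
          rw [h2, div_one]
          exact ne_of_lt h1
      · obtain ⟨b, hb⟩ := IsAlgClosed.exists_root (g.denom.map (algebraMap F L)) (by
          rw [Polynomial.degree_map]
          intro h
          have := Polynomial.natDegree_eq_zero_iff_degree_le_zero.mpr (le_of_eq h)
          omega)
        refine ⟨b, ?_, ?_⟩
        · rw [hiν, map_div₀]
          exact div_ne_zero (ptVal_poly_ne_zero b hnum0) (ptVal_poly_ne_zero b hden0)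
        · rw [hiν, map_div₀]
          have h1 : ptVal b (algebraMap (Polynomial L) (RatFunc L)
              (g.denom.map (algebraMap F L))) < 1 := (ptVal_poly_lt_one_iff _ _).mpr hb
          have h2 : ptVal b (algebraMap (Polynomial L) (RatFunc L)
              (g.num.map (algebraMap F L))) = 1 := (ptVal_poly_eq_one_iff _ _).mpr
            (fun hz => hnotboth b ⟨hz, hb⟩)
          rw [h2]
          intro hcon
          rw [one_div, inv_eq_one] at hcon
          rw [hcon] at h1
          exact lt_irrefl _ h1
    intro P hP hzero
    have : Polynomial.aeval (ι g) (P.map (algebraMap F L)) ≠ 0 :=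
      aeval_ne_zero_of_val (ptVal b) (fun k hk => ptVal_C_eq_one b hk) hb.1 hb.2
        (Polynomial.map_ne_zero hP)
    apply this
    rw [← hcomp, hzero, map_zero]
  intro p q hpq
  have : Polynomial.aeval g (p - q) = 0 := by rw [map_sub, hpq, sub_self]
  by_contra hne
  exact key (p - q) (sub_ne_zero_of_ne (fun h => hne (by rw [h]))) this

theorem ratfunc_eval2_id (b : F) (p : Polynomial F) :
    p.eval₂ (RingHom.id F) b = p.eval b := rfl

end Helpers

/-- partial sums of the geometric series in `j` -/
def sgeom (j : ℕ) : ℕ → ℕ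
  | 0 => 0
  | k + 1 => 1 + j * sgeom j k

theorem sgeom_add (j k : ℕ) : ∀ d : ℕ, sgeom j (k + d) = sgeom j d + j ^ d * sgeom j k := by
  intro d
  induction d with
  | zero => simp [sgeom]
  | succ d ih =>
    show sgeom j (k + d + 1) = (1 + j * sgeom j d) + j ^ (d+1) * sgeom j k
    show 1 + j * sgeom j (k + d) = _
    rw [ih, pow_succ]
    ring

theorem sgeom_mono {j : ℕ} (hj : 1 ≤ j) : Monotone (sgeom j) := by
  apply monotone_nat_of_le_succ
  intro n
  show sgeom j n ≤ 1 + j * sgeom j n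
  nlinarith

theorem sgeom_one : ∀ k, sgeom 1 k = k := by
  intro k
  induction k with
  | zero => rfl
  | succ k ih => show 1 + 1 * sgeom 1 k = k + 1; omega

theorem sgeom_geom (j : ℕ) (hj : 1 ≤ j) : ∀ k, (j - 1) * sgeom j k + 1 = j ^ k := by
  obtain ⟨i, rfl⟩ := Nat.exists_eq_add_of_le hj
  intro k
  induction k with
  | zero => simp [sgeom]
  | succ k ih =>
    show (1 + i - 1) * (1 + (1 + i) * sgeom (1+i) k) + 1 = (1 + i) ^ (k + 1)
    rw [pow_succ, ← ih]
    simp only [Nat.add_sub_cancel_left]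
    ring

section Extra
variable {F : Type*} [Field F]
-- new helpers
theorem ratfunc_eval2_id' (b : F) (p : Polynomial F) :
    p.eval₂ (RingHom.id F) b = p.eval b := rfl

theorem ratfunc_eval_eq (b : F) (f : RatFunc F) :
    RatFunc.eval (RingHom.id F) b f = f.num.eval b / f.denom.eval b := rfl

theorem denom_eval_ne_zero_of_le (b : F) {f : RatFunc F} (hf : f ≠ 0)
    (h : ptVal b f ≤ 1) : f.denom.eval b ≠ 0 :=
  fun hz => absurd ((ptVal_gt_one_iff b hf).mpr hz) (not_lt.mpr h)

theorem eval_mul_of_le (b : F) {f g : RatFunc F} (hf : f ≠ 0) (hg : g ≠ 0)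
    (h1 : ptVal b f ≤ 1) (h2 : ptVal b g ≤ 1) :
    RatFunc.eval (RingHom.id F) b (f * g) =
      RatFunc.eval (RingHom.id F) b f * RatFunc.eval (RingHom.id F) b g := by
  apply RatFunc.eval_mul
  · rw [ratfunc_eval2_id']; exact denom_eval_ne_zero_of_le b hf h1
  · rw [ratfunc_eval2_id']; exact denom_eval_ne_zero_of_le b hg h2

theorem eval_pow_of_le (b : F) {f : RatFunc F} (hf : f ≠ 0)
    (h1 : ptVal b f ≤ 1) (i : ℕ) :
    RatFunc.eval (RingHom.id F) b (f ^ i) = (RatFunc.eval (RingHom.id F) b f) ^ i := by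
  induction i with
  | zero => simp
  | succ i ih =>
    rw [pow_succ, pow_succ, ← ih]
    apply eval_mul_of_le b (pow_ne_zero i hf) hf ?_ h1
    rw [map_pow]
    exact pow_le_one' h1 i

theorem eval_ne_zero_of_val_one (b : F) {f : RatFunc F} (hf : f ≠ 0)
    (h : ptVal b f = 1) : RatFunc.eval (RingHom.id F) b f ≠ 0 := by
  rw [ratfunc_eval_eq]
  obtain ⟨h1, h2⟩ := (ptVal_eq_one_iff b hf).mp h
  exact div_ne_zero h1 h2

theorem zm0_combine {x : ℤₘ₀} (hx : x ≠ 0) (hx1 : x ≠ 1) {j m kN kD : ℕ}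
    (hE : (j : ℤ) + ((kN : ℤ) - kD) * m ≠ 0) :
    x ^ j * (x ^ kN / x ^ kD) ^ m ≠ 1 := by
  have h1 : x ^ kN / x ^ kD = x ^ ((kN : ℤ) - kD) := by
    rw [zpow_sub₀ hx, zpow_natCast, zpow_natCast]
  rw [h1, ← zpow_natCast x j, ← zpow_natCast (x ^ ((kN : ℤ) - (kD : ℤ))) m, ← zpow_mul,
    ← zpow_add₀ hx]
  exact zm0_zpow_ne_one hx hx1 hE

theorem Ene {j m : ℕ} (hj1 : 1 ≤ j) (hjm : j < m) (kN kD : ℕ) :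
    (j : ℤ) + ((kN : ℤ) - kD) * m ≠ 0 := by
  intro h
  have hdvd : (m : ℤ) ∣ (j : ℤ) := ⟨-((kN : ℤ) - kD), by linarith⟩
  have hmj : (m : ℤ) ≤ (j : ℤ) := Int.le_of_dvd (by exact_mod_cast hj1) hdvd
  have : m ≤ j := by exact_mod_cast hmj
  omega

end Extra

/-- Proposition 9.1 ('trivial case converse') of the paper: for trivial maps
φ = c·x^j·ψ(x)^m with an orbit containing infinitely many m-th powers, gcd(t, j) = 1
and the index set of m-th powers (together with ∞) in the orbit is a single arithmetic
progression of explicitly determined modulus M ≤ m. -/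
theorem stmt_15
    (K : Type*) [Field K] [NumberField K]
    (m : ℕ) (hm : 2 ≤ m)
    (c : K) (hc : c ≠ 0) (j : ℕ) (hj : j ≤ m - 1) (ψ : RatFunc K)
    (φ : RatFunc K) (hφ : φ = RatFunc.C c * RatFunc.X ^ j * ψ ^ m)
    (hdeg : 2 ≤ max φ.num.natDegree φ.denom.natDegree)
    (Φ : ℕ → RatFunc K)
    (hΦ0 : Φ 0 = RatFunc.X)
    (hΦit : ∀ n, Φ (n + 1) =
      Polynomial.aeval (Φ n) φ.num / Polynomial.aeval (Φ n) φ.denom)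
    (t : ℕ) (ht1 : 1 ≤ t) (ht2 : ∃ b : K, c ^ t = b ^ m)
    (ht3 : ∀ t' : ℕ, 1 ≤ t' → (∃ b : K, c ^ t' = b ^ m) → t ≤ t')
    (a : K)
    (hV : {x : K | (∃ b : K, x = b ^ m) ∧ ∃ n : ℕ,
      Polynomial.eval a (Φ n).denom ≠ 0 ∧
      Polynomial.eval a (Φ n).num = x * Polynomial.eval a (Φ n).denom}.Infinite) :
    Nat.gcd t j = 1 ∧
    ∃ ℓ M : ℕ, 1 ≤ M ∧ M ≤ m ∧
      {n : ℕ | Polynomial.eval a (Φ n).denom = 0 ∨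
        ∃ b : K, Polynomial.eval a (Φ n).num = b ^ m * Polynomial.eval a (Φ n).denom}
        = {n : ℕ | ∃ k : ℕ, n = ℓ + k * M} ∧
      (j = 1 → M = t) ∧
      (2 ≤ j → M = orderOf ((j : ZMod (t * (j - 1))))) := by
  classical
  have hm0 : m ≠ 0 := by omega
  have hφne : φ ≠ 0 := by
    intro h
    rw [h] at hdeg
    simp only [RatFunc.num_zero, RatFunc.denom_zero, Polynomial.natDegree_zero,
      Polynomial.natDegree_one, max_self] at hdeg
    omega
  have hψne : ψ ≠ 0 := by
    intro h
    apply hφne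
    rw [hφ, h, zero_pow hm0, mul_zero]
  have hφnc : Nonconst φ := by
    intro k hk
    rw [hk] at hdeg
    rw [RatFunc.num_C, RatFunc.denom_C, Polynomial.natDegree_C, Polynomial.natDegree_one] at hdeg
    omega
  have hnc : ∀ n, Nonconst (Φ n) := by
    intro n
    induction n with
    | zero =>
      intro k hk
      rw [hΦ0] at hk
      have := congrArg RatFunc.num hk
      rw [RatFunc.num_X, RatFunc.num_C] at this
      exact Polynomial.X_ne_C k this
    | succ n ih =>
      set Θ : RatFunc K →+* RatFunc K :=
        IsFractionRing.lift (aeval_injective_of_nonconst ih) with hΘdef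
      have hΘa : ∀ p : Polynomial K, Θ (algebraMap (Polynomial K) (RatFunc K) p) =
          Polynomial.aeval (Φ n) p := fun p => IsFractionRing.lift_algebraMap _ p
      have hformula : Φ (n + 1) = Θ φ := by
        rw [hΦit n]
        conv_rhs => rw [← φ.num_div_denom, map_div₀, hΘa, hΘa]
      have hΘC : ∀ k : K, Θ (RatFunc.C k) = RatFunc.C k := by
        intro k
        conv_lhs => rw [← RatFunc.algebraMap_C k]
        rw [hΘa, Polynomial.aeval_C, RatFunc.algebraMap_eq_C]
      intro k hk
      apply hφnc k
      apply Θ.injective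
      rw [← hformula, hk, hΘC k]
  have hTh : ∀ n : ℕ, ∃ Θ : RatFunc K →+* RatFunc K,
      (Φ (n + 1) = Θ φ) ∧
      (Θ φ = RatFunc.C c * (Φ n) ^ j * (Θ ψ) ^ m) ∧
      (Θ ψ = Polynomial.aeval (Φ n) ψ.num / Polynomial.aeval (Φ n) ψ.denom) ∧
      (Θ ψ ≠ 0) := by
    intro n
    set Θ : RatFunc K →+* RatFunc K :=
      IsFractionRing.lift (aeval_injective_of_nonconst (hnc n)) with hΘdef
    have hΘa : ∀ p : Polynomial K, Θ (algebraMap (Polynomial K) (RatFunc K) p) =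
        Polynomial.aeval (Φ n) p := fun p => IsFractionRing.lift_algebraMap _ p
    have hΘC : ∀ k : K, Θ (RatFunc.C k) = RatFunc.C k := by
      intro k
      conv_lhs => rw [← RatFunc.algebraMap_C k]
      rw [hΘa, Polynomial.aeval_C, RatFunc.algebraMap_eq_C]
    have hΘX : Θ RatFunc.X = Φ n := by
      rw [← RatFunc.algebraMap_X, hΘa, Polynomial.aeval_X]
    refine ⟨Θ, ?_, ?_, ?_, ?_⟩
    · rw [hΦit n]
      conv_rhs => rw [← φ.num_div_denom, map_div₀, hΘa, hΘa]
    · rw [hφ, map_mul, map_mul, map_pow, map_pow, hΘC, hΘX]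
    · conv_lhs => rw [← ψ.num_div_denom, map_div₀, hΘa, hΘa]
    · intro h
      apply hψne
      apply Θ.injective
      rw [h, map_zero]
  set va : Valuation (RatFunc K) ℤₘ₀ := ptVal a with hva
  have hCa : ∀ k : K, k ≠ 0 → va (RatFunc.C k) = 1 := fun k hk => ptVal_C_eq_one a hk
  have hΦ0' : ∀ n, Φ n ≠ 0 := fun n => nonconst_ne_zero (hnc n)
  -- a general divisibility fact from minimality of t
  have hdvdt : ∀ s : ℕ, (∃ d : K, c ^ s = d ^ m) → t ∣ s := by
    rintro s ⟨d, hd⟩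
    obtain ⟨b1, hb1⟩ := ht2
    have hb1ne : b1 ≠ 0 := by
      intro h
      rw [h, zero_pow hm0] at hb1
      exact pow_ne_zero t hc hb1
    have hrw : (b1 ^ (s / t)) ^ m = c ^ (t * (s / t)) := by
      rw [← pow_mul, mul_comm (s / t) m, pow_mul, ← hb1, ← pow_mul]
    have hr : c ^ (s % t) = (d / b1 ^ (s / t)) ^ m := by
      have hmod := Nat.div_add_mod s t
      rw [div_pow, ← hd, hrw, eq_div_iff (pow_ne_zero _ hc), ← pow_add]
      congr 1
      omega
    rcases Nat.eq_zero_or_pos (s % t) with h0 | hpos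
    · exact Nat.dvd_of_mod_eq_zero h0
    · have h1 := ht3 (s % t) hpos ⟨_, hr⟩
      have h2 := Nat.mod_lt s (by omega : 0 < t)
      omega
  rcases Nat.eq_zero_or_pos j with hj0 | hj1
  · -- j = 0 branch
    subst hj0
    have hCcne : RatFunc.C c ≠ 0 := by
      rw [← RatFunc.algebraMap_C c]
      exact RatFunc.algebraMap_ne_zero (Polynomial.C_ne_zero.mpr hc)
    have hform0 : ∀ n, ∃ h : RatFunc K, h ≠ 0 ∧ Φ (n + 1) = RatFunc.C c * h ^ m := by
      intro n
      obtain ⟨Θ, hf, hprod, hψform, hψ0⟩ := hTh n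
      refine ⟨Θ ψ, hψ0, ?_⟩
      rw [hf, hprod, pow_zero, mul_one]
    have hsplit : ∀ n : ℕ, (Polynomial.eval a (Φ (n + 1)).denom = 0) ∨
        (Polynomial.eval a (Φ (n + 1)).denom ≠ 0 ∧ ∃ w : K,
          RatFunc.eval (RingHom.id K) a (Φ (n + 1)) = c * w ^ m) := by
      intro n
      obtain ⟨h, hne, hform⟩ := hform0 n
      by_cases hle : va (Φ (n + 1)) ≤ 1
      · right
        have hd : Polynomial.eval a (Φ (n + 1)).denom ≠ 0 :=
          denom_eval_ne_zero_of_le a (hΦ0' (n + 1)) hle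
        refine ⟨hd, RatFunc.eval (RingHom.id K) a h, ?_⟩
        have hvh : va h ≤ 1 := by
          by_contra hgt
          push_neg at hgt
          have h1 : 1 < va (Φ (n + 1)) := by
            rw [hform, map_mul, map_pow, hCa c hc, one_mul]
            exact one_lt_pow₀ hgt hm0
          exact absurd hle (not_le.mpr h1)
        rw [hform, eval_mul_of_le a hCcne (pow_ne_zero m hne) (le_of_eq (hCa c hc))
          (by rw [map_pow]; exact pow_le_one' hvh m), eval_pow_of_le a hne hvh m,
          RatFunc.eval_C]
        rfl
      · left
        push_neg at hle
        exact (ptVal_gt_one_iff a (hΦ0' (n + 1))).mp hle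
    have ht : t = 1 := by
      obtain ⟨x, hx⟩ := (hV.diff ((Set.finite_singleton a).insert 0)).nonempty
      obtain ⟨⟨⟨b, hb⟩, n, hdn, hen⟩, hnot⟩ := hx
      have hxa : x ≠ a := by intro h; exact hnot (by simp [h])
      have hx0 : x ≠ 0 := by intro h; exact hnot (by simp [h])
      obtain ⟨n', rfl⟩ : ∃ n', n = n' + 1 := by
        rcases n with _ | n'
        · exfalso
          rw [hΦ0, RatFunc.num_X, RatFunc.denom_X, Polynomial.eval_X,
            Polynomial.eval_one, mul_one] at hen
          exact hxa hen.symm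
        · exact ⟨n', rfl⟩
      rcases hsplit n' with hd | ⟨hd, w, hw⟩
      · exact absurd hd hdn
      · have hux : RatFunc.eval (RingHom.id K) a (Φ (n' + 1)) = x := by
          rw [ratfunc_eval_eq, hen, mul_div_assoc, div_self hdn, mul_one]
        have hwx : c * w ^ m = x := by rw [← hw, hux]
        have hwne : w ≠ 0 := by
          intro h
          rw [h, zero_pow hm0, mul_zero] at hwx
          exact hx0 hwx.symm
        have hcm : c = (b / w) ^ m := by
          rw [div_pow, ← hb, ← hwx, mul_div_assoc, div_self (pow_ne_zero m hwne), mul_one]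
        have := ht3 1 le_rfl ⟨b / w, by rw [pow_one]; exact hcm⟩
        omega
    subst ht
    obtain ⟨b1, hb1⟩ := ht2
    rw [pow_one] at hb1
    have hmem1 : ∀ n' : ℕ, (Polynomial.eval a (Φ (n' + 1)).denom = 0 ∨
        ∃ b : K, Polynomial.eval a (Φ (n' + 1)).num =
          b ^ m * Polynomial.eval a (Φ (n' + 1)).denom) := by
      intro n'
      rcases hsplit n' with hd | ⟨hd, w, hw⟩
      · left; exact hd
      · right
        refine ⟨b1 * w, ?_⟩
        have h1 : RatFunc.eval (RingHom.id K) a (Φ (n' + 1)) = (b1 * w) ^ m := by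
          rw [hw, mul_pow, ← hb1]
        rw [ratfunc_eval_eq] at h1
        exact (div_eq_iff hd).mp h1
    have h0mem : (Polynomial.eval a (Φ 0).denom = 0 ∨
        ∃ b : K, Polynomial.eval a (Φ 0).num = b ^ m * Polynomial.eval a (Φ 0).denom) ↔
        (∃ b : K, a = b ^ m) := by
      rw [hΦ0, RatFunc.num_X, RatFunc.denom_X]
      simp
    refine ⟨by simp, ?_⟩
    by_cases hA : ∃ b : K, a = b ^ m
    · refine ⟨0, 1, le_rfl, by omega, ?_, ?_, ?_⟩
      · ext n
        simp only [Set.mem_setOf_eq]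
        constructor
        · intro _
          exact ⟨n, by omega⟩
        · intro _
          rcases n with _ | n'
          · exact h0mem.mpr hA
          · exact hmem1 n'
      · intro h; omega
      · intro h; omega
    · refine ⟨1, 1, le_rfl, by omega, ?_, ?_, ?_⟩
      · ext n
        simp only [Set.mem_setOf_eq]
        constructor
        · intro hn
          rcases n with _ | n'
          · exact absurd (h0mem.mp hn) hA
          · exact ⟨n', by omega⟩
        · rintro ⟨k, hk⟩
          obtain ⟨n', rfl⟩ : ∃ n', n = n' + 1 := ⟨k, by omega⟩
          exact hmem1 n'
      · intro h; omega
      · intro h; omega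

  · -- j ≥ 1 branch
    have hjm : j < m := by omega
    have hinv : ∀ n : ℕ, va (Φ n) ≠ 1 → va (Φ (n + 1)) ≠ 1 := by
      intro n hne
      obtain ⟨Θ, hf, hprod, hψform, hψ0⟩ := hTh n
      have hx0 : va (Φ n) ≠ 0 := ptVal_ne_zero a (hΦ0' n)
      rw [hf, hprod, map_mul, map_mul, map_pow, map_pow, hCa c hc, one_mul, hψform, map_div₀]
      rcases lt_trichotomy (va (Φ n)) 1 with hlt | heq | hgt
      · rw [aeval_zero va hCa hlt ψ.num (RatFunc.num_ne_zero hψne),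
          aeval_zero va hCa hlt ψ.denom ψ.denom_ne_zero]
        exact zm0_combine hx0 hne (Ene hj1 hjm _ _)
      · exact absurd heq hne
      · rw [aeval_pole va hCa hgt ψ.num.natDegree ψ.num (RatFunc.num_ne_zero hψne) rfl,
          aeval_pole va hCa hgt ψ.denom.natDegree ψ.denom ψ.denom_ne_zero rfl]
        exact zm0_combine hx0 hne (Ene hj1 hjm _ _)
    -- all iterates are regular and nonvanishing at a
    have hall : ∀ n, va (Φ n) = 1 := by
      by_contra hbad
      push_neg at hbad
      obtain ⟨n0, hn0⟩ := hbad
      have hlater : ∀ k, va (Φ (n0 + k)) ≠ 1 := by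
        intro k
        induction k with
        | zero => exact hn0
        | succ k ih => exact hinv (n0 + k) ih
      apply hV
      apply Set.Finite.subset (Set.Finite.union
        (Set.Finite.image (fun i => RatFunc.eval (RingHom.id K) a (Φ i)) (Set.finite_Iio n0))
        (Set.finite_singleton (0 : K)))
      rintro x ⟨⟨b, hb⟩, n, hdn, hen⟩
      by_cases hn : n < n0
      · left
        refine ⟨n, hn, ?_⟩
        show RatFunc.eval (RingHom.id K) a (Φ n) = x
        rw [ratfunc_eval_eq, hen, mul_div_assoc, div_self hdn, mul_one]
      · right
        have hva1 : va (Φ n) ≠ 1 := by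
          have : n = n0 + (n - n0) := by omega
          rw [this]
          exact hlater (n - n0)
        have hnum0 : (Φ n).num.eval a = 0 := by
          rcases lt_trichotomy (va (Φ n)) 1 with hlt | heq | hgt
          · exact (ptVal_lt_one_iff a (hΦ0' n)).mp hlt
          · exact absurd heq hva1
          · exact absurd ((ptVal_gt_one_iff a (hΦ0' n)).mp hgt) hdn
        have : x * Polynomial.eval a (Φ n).denom = 0 := by rw [← hen, hnum0]
        rcases mul_eq_zero.mp this with h | h
        · simpa using h
        · exact absurd h hdn
    have hreg : ∀ n, (Φ n).num.eval a ≠ 0 ∧ (Φ n).denom.eval a ≠ 0 :=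
      fun n => (ptVal_eq_one_iff a (hΦ0' n)).mp (hall n)
    set u : ℕ → K := fun n => RatFunc.eval (RingHom.id K) a (Φ n) with hu
    have hu0 : ∀ n, u n ≠ 0 := fun n => eval_ne_zero_of_val_one a (hΦ0' n) (hall n)
    -- the multiplicative recursion for the values
    have hrec : ∀ n, ∃ w : K, w ≠ 0 ∧ u (n + 1) = c * u n ^ j * w ^ m := by
      intro n
      obtain ⟨Θ, hf, hprod, hψform, hψ0⟩ := hTh n
      have hform : Φ (n + 1) = RatFunc.C c * (Φ n) ^ j * (Θ ψ) ^ m := hf.trans hprod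
      have hvh : va (Θ ψ) = 1 := by
        have h1 := hall (n + 1)
        rw [hform, map_mul, map_mul, map_pow, map_pow, hCa c hc, one_mul, hall n,
          one_pow, one_mul] at h1
        exact zm0_pow_eq_one (ptVal_ne_zero a hψ0) hm0 h1
      have hCcne : RatFunc.C c ≠ 0 := by
        rw [← RatFunc.algebraMap_C c]
        exact RatFunc.algebraMap_ne_zero (Polynomial.C_ne_zero.mpr hc)
      have hpow1 : va ((Φ n) ^ j) ≤ 1 := by rw [map_pow, hall n, one_pow]
      have hCle : va (RatFunc.C c) ≤ 1 := le_of_eq (hCa c hc)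
      refine ⟨RatFunc.eval (RingHom.id K) a (Θ ψ), eval_ne_zero_of_val_one a hψ0 hvh, ?_⟩
      have e1 : u (n + 1) = RatFunc.eval (RingHom.id K) a (RatFunc.C c * (Φ n) ^ j)
          * RatFunc.eval (RingHom.id K) a ((Θ ψ) ^ m) := by
        rw [hu]
        simp only
        rw [hform]
        apply eval_mul_of_le a (mul_ne_zero hCcne (pow_ne_zero j (hΦ0' n)))
          (pow_ne_zero m hψ0) ?_ ?_
        · rw [map_mul]
          calc va (RatFunc.C c) * va ((Φ n) ^ j) ≤ 1 * 1 := mul_le_mul' hCle hpow1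
            _ = 1 := mul_one 1
        · rw [map_pow, hvh, one_pow]
      rw [e1, eval_mul_of_le a hCcne (pow_ne_zero j (hΦ0' n)) hCle hpow1,
        eval_pow_of_le a (hΦ0' n) (le_of_eq (hall n)) j,
        eval_pow_of_le a hψ0 (le_of_eq hvh) m, RatFunc.eval_C]
      rfl
    -- iterated form
    have hform : ∀ n k, ∃ z : K, z ≠ 0 ∧
        u (n + k) = c ^ (sgeom j k) * (u n) ^ (j ^ k) * z ^ m := by
      intro n k
      induction k with
      | zero =>
        exact ⟨1, one_ne_zero, by simp [sgeom]⟩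
      | succ k ih =>
        obtain ⟨z, hz, hzeq⟩ := ih
        obtain ⟨w, hw, hweq⟩ := hrec (n + k)
        refine ⟨z ^ j * w, mul_ne_zero (pow_ne_zero j hz) hw, ?_⟩
        have : n + (k + 1) = (n + k) + 1 := by omega
        rw [this, hweq, hzeq, show sgeom j (k + 1) = 1 + j * sgeom j k from rfl,
          pow_succ j k]
        ring
    -- membership transfer
    set P : ℕ → Prop := fun n => ∃ b : K, u n = b ^ m with hP
    have hmem : ∀ n k, P n → (P (n + k) ↔ t ∣ sgeom j k) := by
      rintro n k ⟨b, hb⟩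
      have hbne : b ≠ 0 := by
        intro h
        apply hu0 n
        rw [hb, h, zero_pow hm0]
      obtain ⟨z, hz, hzeq⟩ := hform n k
      have hzeq' : u (n + k) = c ^ (sgeom j k) * (b ^ (j ^ k) * z) ^ m := by
        rw [hzeq, hb]
        ring
      constructor
      · rintro ⟨B, hB⟩
        apply hdvdt
        refine ⟨B / (b ^ (j ^ k) * z), ?_⟩
        rw [div_pow, ← hB, hzeq', mul_div_assoc, div_self (pow_ne_zero m
          (mul_ne_zero (pow_ne_zero _ hbne) hz)), mul_one]
      · rintro ⟨q, hq⟩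
        obtain ⟨b1, hb1⟩ := ht2
        refine ⟨b1 ^ q * (b ^ (j ^ k) * z), ?_⟩
        rw [hzeq', hq, pow_mul, hb1]
        ring
    -- characterize the N set
    have hNchar : ∀ n, (Polynomial.eval a (Φ n).denom = 0 ∨
        ∃ b : K, Polynomial.eval a (Φ n).num = b ^ m * Polynomial.eval a (Φ n).denom) ↔ P n := by
      intro n
      have hd := (hreg n).2
      constructor
      · rintro (h | ⟨b, hb⟩)
        · exact absurd h hd
        · exact ⟨b, by rw [hu]; simp only; rw [ratfunc_eval_eq, hb, mul_div_assoc,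
            div_self hd, mul_one]⟩
      · rintro ⟨b, hb⟩
        right
        refine ⟨b, ?_⟩
        rw [hu] at hb
        simp only at hb
        rw [ratfunc_eval_eq] at hb
        field_simp at hb
        rw [hb, mul_comm]
    -- N is nonempty and infinite
    have hNe : ∃ n, P n := by
      obtain ⟨x, ⟨⟨b, hb⟩, n, hdn, hen⟩⟩ := hV.nonempty
      refine ⟨n, ⟨b, ?_⟩⟩
      rw [hu]
      simp only
      rw [ratfunc_eval_eq, hen, mul_div_assoc, div_self hdn, mul_one, hb]
    have hNinf : {n : ℕ | P n}.Infinite := by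
      apply Set.Infinite.of_image u
      apply Set.Infinite.mono ?_ hV
      rintro x ⟨⟨b, hb⟩, n, hdn, hen⟩
      have hux : u n = x := by
        rw [hu]; simp only
        rw [ratfunc_eval_eq, hen, mul_div_assoc, div_self hdn, mul_one]
      exact ⟨n, ⟨b, by rw [hux, hb]⟩, hux⟩
    set ℓ : ℕ := Nat.find hNe with hℓ
    have hPl : P ℓ := Nat.find_spec hNe
    obtain ⟨n1, hn1⟩ : ∃ n1, P n1 ∧ ℓ < n1 := by
      obtain ⟨n1, hn1⟩ := (hNinf.diff (Set.finite_le_nat ℓ)).nonempty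
      exact ⟨n1, hn1.1, by simpa using hn1.2⟩
    set k0 : ℕ := n1 - ℓ with hk0
    have hk0pos : 0 < k0 := by omega
    have hk0S : t ∣ sgeom j k0 := by
      apply (hmem ℓ k0 hPl).mp
      rw [show ℓ + k0 = n1 by omega]
      exact hn1.1
    -- gcd t j = 1
    have hgcd : Nat.gcd t j = 1 := by
      obtain ⟨k0', hk0'⟩ : ∃ k0', k0 = k0' + 1 := ⟨k0 - 1, by omega⟩
      rw [hk0'] at hk0S
      have hs : sgeom j (k0' + 1) = 1 + j * sgeom j k0' := rfl
      have h1 : Nat.gcd t j ∣ 1 + j * sgeom j k0' := by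
        rw [← hs]; exact dvd_trans (Nat.gcd_dvd_left t j) hk0S
      have h2 : Nat.gcd t j ∣ j * sgeom j k0' := (Nat.gcd_dvd_right t j).mul_right _
      have := Nat.dvd_sub h1 h2
      simpa using this
    have htj : Nat.Coprime t j := hgcd
    -- closure properties
    have hSsub : ∀ k d, t ∣ sgeom j k → t ∣ sgeom j (k + d) → t ∣ sgeom j d := by
      intro k d h1 h2
      rw [sgeom_add] at h2
      have := Nat.dvd_sub h2 (h1.mul_left (j ^ d))
      simpa using this
    have hSadd : ∀ k d, t ∣ sgeom j k → t ∣ sgeom j d → t ∣ sgeom j (k + d) := by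
      intro k d h1 h2
      rw [sgeom_add]
      exact dvd_add h2 (h1.mul_left _)
    have hMex : ∃ M : ℕ, 0 < M ∧ t ∣ sgeom j M := ⟨k0, hk0pos, hk0S⟩
    set M : ℕ := Nat.find hMex with hM
    have hMspec : 0 < M ∧ t ∣ sgeom j M := Nat.find_spec hMex
    have hSM : ∀ k, t ∣ sgeom j k ↔ M ∣ k := by
      have hmul : ∀ q, t ∣ sgeom j (M * q) := by
        intro q
        induction q with
        | zero => simp [sgeom]
        | succ q ih =>
          rw [Nat.mul_succ]
          exact hSadd _ _ ih hMspec.2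
      intro k
      constructor
      · induction k using Nat.strong_induction_on with
        | _ k ih =>
          intro hk
          rcases Nat.eq_zero_or_pos k with rfl | hkpos
          · exact dvd_zero M
          · have hMk : M ≤ k := by
              by_contra hlt
              exact Nat.find_min hMex (by omega : k < M) ⟨hkpos, hk⟩
            have h2 : t ∣ sgeom j (k - M) := by
              apply hSsub M (k - M) hMspec.2
              rw [Nat.add_sub_cancel' hMk]
              exact hk
            rcases Nat.eq_zero_or_pos (k - M) with h0 | hpos
            · have : k = M := by omega
              rw [this]
            · have h4 := ih (k - M) (by omega) h2
              have h5 : M ∣ (k - M) + M := Nat.dvd_add h4 (dvd_refl M)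
              rwa [Nat.sub_add_cancel hMk] at h5
      · rintro ⟨q, rfl⟩
        exact hmul q
    -- M ≤ m
    have htm : t ≤ m := ht3 m (by omega) ⟨c, rfl⟩
    have hMm : M ≤ m := by
      have aux : ∀ k1 k2 : ℕ, k1 < k2 → k2 < t + 1 → sgeom j k1 % t = sgeom j k2 % t →
          ∃ d, 0 < d ∧ d ≤ t ∧ t ∣ sgeom j d := by
        intro k1 k2 hlt hk2 heq
        refine ⟨k2 - k1, by omega, by omega, ?_⟩
        have hs : sgeom j k2 = sgeom j k1 + j ^ k1 * sgeom j (k2 - k1) := by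
          conv_lhs => rw [show k2 = (k2 - k1) + k1 by omega]
          rw [sgeom_add j (k2 - k1) k1]
        have hmod : sgeom j k1 ≡ sgeom j k2 [MOD t] := heq
        have hdvd2 := (Nat.modEq_iff_dvd' (sgeom_mono hj1 (le_of_lt hlt))).mp hmod
        rw [hs, Nat.add_sub_cancel_left] at hdvd2
        exact (htj.pow_right k1).dvd_of_dvd_mul_left hdvd2
      obtain ⟨k1, hk1, k2, hk2, hne, heq⟩ :=
        Finset.exists_ne_map_eq_of_card_lt_of_maps_to
          (s := Finset.range (t + 1)) (t := Finset.range t)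
          (by simp)
          (fun k _ => Finset.mem_range.mpr (Nat.mod_lt _ (by omega : 0 < t)))
      rw [Finset.mem_range] at hk1 hk2
      obtain ⟨d, hd1, hd2, hd3⟩ :=
        (hne.lt_or_gt).elim (fun h => aux k1 k2 h hk2 heq) (fun h => aux k2 k1 h hk1 heq.symm)
      calc M ≤ d := Nat.find_min' hMex ⟨hd1, hd3⟩
        _ ≤ t := hd2
        _ ≤ m := htm
    refine ⟨hgcd, ℓ, M, hMspec.1, hMm, ?_, ?_, ?_⟩
    · -- the set equality
      ext n
      simp only [Set.mem_setOf_eq]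
      rw [hNchar n]
      constructor
      · intro hPn
        have hln : ℓ ≤ n := Nat.find_min' hNe hPn
        have hdv : t ∣ sgeom j (n - ℓ) := by
          apply (hmem ℓ (n - ℓ) hPl).mp
          rw [Nat.add_sub_cancel' hln]
          exact hPn
        obtain ⟨q, hq⟩ := (hSM _).mp hdv
        refine ⟨q, ?_⟩
        rw [mul_comm q M, ← hq, Nat.add_sub_cancel' hln]
      · rintro ⟨k, rfl⟩
        have : t ∣ sgeom j (k * M) := (hSM _).mpr ⟨k, mul_comm k M⟩
        exact (hmem ℓ (k * M) hPl).mpr this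
    · -- j = 1
      intro hj1'
      subst hj1'
      apply le_antisymm
      · apply Nat.find_min' hMex
        refine ⟨by omega, ?_⟩
        rw [sgeom_one]
      · have := hMspec.2
        rw [sgeom_one] at this
        exact Nat.le_of_dvd hMspec.1 this
    · -- j ≥ 2
      intro hj2
      set n0 : ℕ := t * (j - 1) with hn0
      haveI : NeZero n0 := ⟨(Nat.mul_pos (by omega) (by omega)).ne'⟩
      have hkey : ∀ k, t ∣ sgeom j k ↔ ((j : ZMod n0)) ^ k = 1 := by
        intro k
        have hgeo : sgeom j k * (j - 1) = j ^ k - 1 := by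
          rw [mul_comm]
          exact Nat.eq_sub_of_add_eq (sgeom_geom j (by omega) k)
        have h1le : 1 ≤ j ^ k := Nat.one_le_pow k j (by omega)
        constructor
        · intro hk
          have h2 : n0 ∣ j ^ k - 1 := by
            rw [← hgeo, hn0]
            exact Nat.mul_dvd_mul hk dvd_rfl
          have h3 : ((j ^ k - 1 : ℕ) : ZMod n0) = 0 :=
            (ZMod.natCast_eq_zero_iff _ _).mpr h2
          rw [Nat.cast_sub h1le, Nat.cast_pow, Nat.cast_one] at h3
          exact sub_eq_zero.mp h3
        · intro hk
          have h3 : ((j ^ k - 1 : ℕ) : ZMod n0) = 0 := by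
            rw [Nat.cast_sub h1le, Nat.cast_pow, Nat.cast_one, hk, sub_self]
          have h2 : n0 ∣ j ^ k - 1 := (ZMod.natCast_eq_zero_iff _ _).mp h3
          rw [← hgeo, hn0] at h2
          exact (Nat.mul_dvd_mul_iff_right (by omega : 0 < j - 1)).mp h2
      have hxM : ((j : ZMod n0)) ^ M = 1 := (hkey M).mp hMspec.2
      have hfin : IsOfFinOrder ((j : ZMod n0)) :=
        isOfFinOrder_iff_pow_eq_one.mpr ⟨M, hMspec.1, hxM⟩
      apply le_antisymm
      · exact Nat.find_min' hMex ⟨hfin.orderOf_pos, (hkey _).mpr (pow_orderOf_eq_one _)⟩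
      · exact Nat.le_of_dvd hMspec.1 (orderOf_dvd_of_pow_eq_one hxM)
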